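/- Let X be an abelian group and let f : X → ℂ be a nowhere-vanishing function satisfying the Hermitian condition f(−x) = conj(f(x)) and the equation f(x+y)·f(x−y) = f(x)²·f(y)·f(−y) for all x, y ∈ X. Then there exist a unitary character α : X → ℂ, a function a : X → ℝ taking only the values ±1 and constant on cosets of 2X, and a quadratic function P : X → ℝ, such that f(x) = α(x)·a(x)·exp(P(x)) for all x ∈ X. -/

import Mathlib

noncomputable instance : RootableBy ℂˣ ℤ where
  root a n := Units.mk0 (Complex.exp (Complex.log (a : ℂ) / n)) (Complex.exp_ne_zero _)
  root_zero a := by ext; simp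
  root_cancel {n} a hn := by
    ext
    have hn' : (n : ℂ) ≠ 0 := Int.cast_ne_zero.2 hn
    rw [Units.val_zpow_eq_zpow_val, Units.val_mk0, ← Complex.exp_int_mul,
      mul_div_cancel₀ _ hn']
    exact Complex.exp_log a.ne_zero

noncomputable instance : DivisibleBy (Additive ℂˣ) ℤ where
  div a n := Additive.ofMul (RootableBy.root (α := ℤ) a.toMul n)
  div_zero a := congrArg Additive.ofMul (RootableBy.root_zero _)
  div_cancel {n} a hn := by
    show Additive.ofMul ((RootableBy.root (α := ℤ) a.toMul n) ^ n) = a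
    rw [RootableBy.root_cancel _ hn]; rfl

theorem kac_bernstein_hermitian_single {X : Type*} [AddCommGroup X] (f : X → ℂ)
    (hf0 : ∀ x, f x ≠ 0)
    (hfH : ∀ x : X, f (-x) = starRingEnd ℂ (f x))
    (hKB : ∀ x y : X, f (x + y) * f (x - y) = f x ^ 2 * f y * f (-y)) :
    ∃ (α : X → ℂ) (a : X → ℝ) (P : X → ℝ),
      (∀ x y : X, α (x + y) = α x * α y) ∧ (∀ x : X, ‖α x‖ = 1) ∧
      (∀ x : X, a x = 1 ∨ a x = -1) ∧ (∀ x y : X, a (x + 2 • y) = a x) ∧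
      (∀ x y : X, P (x + y) + P (x - y) = 2 * (P x + P y)) ∧
      (∀ x : X, f x = α x * (a x : ℂ) * Complex.exp ((P x : ℝ) : ℂ)) := by
  classical
  set r : X → ℝ := fun x => ‖f x‖ with hrdef
  have hrpos : ∀ x, 0 < r x := fun x => norm_pos_iff.2 (hf0 x)
  have hrne : ∀ x, (r x : ℂ) ≠ 0 := fun x => by
    exact_mod_cast (hrpos x).ne'
  set P : X → ℝ := fun x => Real.log (r x) with hPdef
  have hrneg : ∀ x, r (-x) = r x := by
    intro x; simp only [hrdef, hfH, Complex.norm_conj (f x)]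
  have hfabsneg : ∀ x, ‖f (-x)‖ = ‖f x‖ := fun x => by
    rw [hfH]; exact Complex.norm_conj _
  -- modulus functional equation
  have habs : ∀ x y, r (x+y) * r (x-y) = (r x)^2 * (r y)^2 := by
    intro x y
    have h := congrArg (‖·‖) (hKB x y)
    simp only [norm_mul, norm_pow, hfabsneg] at h
    show ‖f (x+y)‖ * ‖f (x-y)‖
      = ‖f x‖^2 * ‖f y‖^2
    rw [h]; ring
  have hPquad : ∀ x y, P (x+y) + P (x-y) = 2*(P x + P y) := by
    intro x y
    have h := congrArg Real.log (habs x y)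
    rw [Real.log_mul (hrpos _).ne' (hrpos _).ne',
      Real.log_mul (pow_ne_zero _ (hrpos _).ne') (pow_ne_zero _ (hrpos _).ne'),
      Real.log_pow, Real.log_pow] at h
    simp only [hPdef]
    push_cast at h
    linarith
  -- f 0
  have hf00 : f 0 ^ 2 = 1 := by
    have h := hKB 0 0
    simp only [add_zero, sub_zero, neg_zero] at h
    have h2 : f 0 ^ 2 * (f 0 ^ 2 - 1) = 0 := by ring_nf; linear_combination -h
    rcases mul_eq_zero.1 h2 with h3 | h3
    · exact absurd (pow_eq_zero_iff (by norm_num) |>.1 h3) (hf0 0)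
    · exact sub_eq_zero.1 h3
  have hr0 : r 0 = 1 := by
    have : (r 0)^2 = 1 := by
      have := congrArg (‖·‖) hf00
      simpa [norm_pow] using this
    nlinarith [hrpos 0]
  have hf0conj : (starRingEnd ℂ) (f 0) = f 0 := by
    have := hfH 0; rw [neg_zero] at this; exact this.symm
  -- unimodular part
  set u : X → ℂ := fun x => f 0 * f x / (r x : ℂ) with hudef
  have hune : ∀ x, u x ≠ 0 := by
    intro x
    simp only [hudef]
    exact div_ne_zero (mul_ne_zero (hf0 0) (hf0 x)) (hrne x)
  have huabs : ∀ x, ‖u x‖ = 1 := by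
    intro x
    simp only [hudef, norm_div, norm_mul, Complex.norm_of_nonneg (hrpos x).le]
    rw [show ‖f 0‖ = r 0 from rfl, hr0, one_mul]
    exact div_self (hrpos x).ne'
  have hu0 : u 0 = 1 := by
    simp only [hudef, hr0, Complex.ofReal_one, div_one, ← sq, hf00]
  have huH : ∀ x, u (-x) = (starRingEnd ℂ) (u x) := by
    intro x
    simp only [hudef, hrneg, map_div₀, map_mul, hf0conj, ← hfH,
      Complex.conj_ofReal]
  have key : ∀ x y, f (x+y) * f (x-y) = f x^2 * (r y:ℂ)^2 := by
    intro x y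
    rw [hKB, hfH, mul_assoc, Complex.mul_conj, Complex.normSq_eq_norm_sq]
    push_cast
    rfl
  have hrc : ∀ x y : X, (r (x+y) : ℂ) * (r (x-y) : ℂ) = (r x:ℂ)^2 * (r y:ℂ)^2 := by
    intro x y
    exact_mod_cast congrArg (fun t : ℝ => (t : ℂ)) (habs x y)
  have hE : ∀ x y, u (x+y) * u (x-y) = u x ^ 2 := by
    intro x y
    simp only [hudef]
    rw [div_mul_div_comm, div_pow]
    rw [show f 0 * f (x+y) * (f 0 * f (x-y)) = f 0 ^2 * (f (x+y) * f (x-y)) by ring,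
      key, hrc, hf00, mul_pow, hf00]
    rw [one_mul, one_mul, mul_comm ((r x:ℂ)^2), ← div_div,
      mul_div_assoc, div_self (pow_ne_zero 2 (hrne y)), mul_one]
  have hv : ∀ x y, u (x+y)^2 = u x^2 * u y^2 := by
    intro x y
    have h1 := hE x y
    have h2 := hE y x
    rw [add_comm y x] at h2
    have h3 : u (y - x) = (starRingEnd ℂ) (u (x - y)) := by
      rw [← huH, neg_sub]
    rw [h3] at h2
    have h4 : u (x-y) * (starRingEnd ℂ) (u (x-y)) = 1 := by
      rw [Complex.mul_conj, Complex.normSq_eq_norm_sq, huabs]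
      norm_num
    calc u (x+y)^2 = u (x+y)^2 * (u (x-y) * (starRingEnd ℂ) (u (x-y))) := by
          rw [h4, mul_one]
    _ = (u (x+y) * u (x-y)) * (u (x+y) * (starRingEnd ℂ) (u (x-y))) := by ring
    _ = u x^2 * u y^2 := by rw [h1, h2]
  have h2y : ∀ x y, u (x + (y + y)) = u x * u y^2 := by
    intro x y
    have h1 := hE (x+y) y
    rw [add_sub_cancel_right, hv, add_assoc] at h1
    apply mul_right_cancel₀ (hune x)
    rw [h1]; ring
  have htor : ∀ g : X, g + g = 0 → u g ^ 2 = 1 := by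
    intro g hg
    have hneg : -g = g := by
      rw [neg_eq_iff_add_eq_zero]; exact hg
    have hcj : u g = (starRingEnd ℂ) (u g) := by rw [← huH, hneg]
    calc u g ^ 2 = u g * (starRingEnd ℂ) (u g) := by rw [← hcj]; ring
    _ = 1 := by rw [Complex.mul_conj, Complex.normSq_eq_norm_sq, huabs]; norm_num
  have hwd : ∀ g g' : X, g + g = g' + g' → u g ^ 2 = u g' ^ 2 := by
    intro g g' h
    have h1 : (g - g') + (g - g') = 0 := by
      have e : (g - g') + (g - g') = (g + g) - (g' + g') := by abel
      rw [e, h, sub_self]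
    have h3 : u g ^ 2 = u g' ^ 2 * u (g - g') ^ 2 := by
      have e := hv g' (g - g')
      rw [show g' + (g - g') = g by abel] at e
      exact e
    rw [h3, htor _ h1, mul_one]
  -- the subgroup 2X
  let D : X →+ X :=
    { toFun := fun g => g + g
      map_zero' := by simp
      map_add' := by intro a b; abel }
  have hsel : ∀ h : D.range, ∃ g : X, g + g = (h : X) := by
    rintro ⟨h, hh⟩
    obtain ⟨g, hg⟩ := AddMonoidHom.mem_range.1 hh
    exact ⟨g, hg⟩
  choose sel hsel using hsel
  let β : D.range →+ Additive ℂˣ :=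
    { toFun := fun h => Additive.ofMul (Units.mk0 (u (sel h) ^ 2) (pow_ne_zero 2 (hune _)))
      map_zero' := by
        have h0 : u (sel 0) ^ 2 = 1 := htor _ (hsel 0)
        show Additive.ofMul _ = (0 : Additive ℂˣ)
        rw [show (0 : Additive ℂˣ) = Additive.ofMul (1 : ℂˣ) from rfl]
        congr 1
        ext
        simpa using h0
      map_add' := by
        intro h h'
        have h1 : (sel h + sel h') + (sel h + sel h') = ((h + h' : D.range) : X) := by
          push_cast
          rw [← hsel h, ← hsel h']
          abel
        have h2 : u (sel (h + h')) ^ 2 = u (sel h) ^ 2 * u (sel h') ^ 2 := by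
          rw [hwd _ _ ((hsel (h + h')).trans h1.symm)]
          exact hv _ _
        show Additive.ofMul _ = Additive.ofMul _ + Additive.ofMul _
        rw [← ofMul_mul]
        congr 1
        ext
        simpa using h2 }
  have hBaer : Module.Baer ℤ (Additive ℂˣ) := Module.Baer.of_divisible _
  obtain ⟨A, hA⟩ := hBaer.extension_property_addMonoidHom D.range.subtype
    Subtype.coe_injective β
  set α : X → ℂ := fun x => ((A x).toMul : ℂ) with hαdef
  have hα2 : ∀ g : X, α (g + g) = u g ^ 2 := by
    intro g
    have hmem : g + g ∈ D.range := AddMonoidHom.mem_range.2 ⟨g, rfl⟩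
    have h1 : A ((⟨g + g, hmem⟩ : D.range) : X) = β ⟨g + g, hmem⟩ := by
      rw [← hA]; rfl
    have h2 : α (g + g) = ((β ⟨g + g, hmem⟩).toMul : ℂ) := by
      exact congrArg (fun z : Additive ℂˣ => ((z.toMul : ℂˣ) : ℂ)) h1
    rw [h2]
    show ((Units.mk0 (u (sel ⟨g + g, hmem⟩) ^ 2) (pow_ne_zero 2 (hune _)) : ℂˣ) : ℂ) = u g ^ 2
    rw [Units.val_mk0]
    exact hwd _ _ (hsel ⟨g + g, hmem⟩)
  have hαadd : ∀ x y, α (x + y) = α x * α y := by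
    intro x y
    show ((A (x + y)).toMul : ℂ) = ((A x).toMul : ℂ) * ((A y).toMul : ℂ)
    rw [map_add, toMul_add, Units.val_mul]
  have hαne : ∀ x, α x ≠ 0 := fun x => Units.ne_zero _
  have hαsq : ∀ x, α x ^ 2 = u x ^ 2 := by
    intro x
    rw [← hα2 x, hαadd]; ring
  have hαabs : ∀ x, ‖α x‖ = 1 := by
    intro x
    have h1 : ‖α x‖ ^ 2 = 1 := by
      rw [← norm_pow, hαsq, norm_pow, huabs, one_pow]
    nlinarith [norm_nonneg (α x)]
  have hsign : ∀ x, u x = α x ∨ u x = -α x := by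
    intro x
    have h1 : (u x - α x) * (u x + α x) = 0 := by
      linear_combination (hαsq x).symm
    rcases mul_eq_zero.1 h1 with h | h
    · exact Or.inl (sub_eq_zero.1 h)
    · exact Or.inr (eq_neg_of_add_eq_zero_left h)
  have hf0cases : f 0 = 1 ∨ f 0 = -1 := by
    have h1 : (f 0 - 1) * (f 0 + 1) = 0 := by linear_combination hf00
    rcases mul_eq_zero.1 h1 with h | h
    · exact Or.inl (sub_eq_zero.1 h)
    · exact Or.inr (eq_neg_of_add_eq_zero_left h)
  set sR : ℝ := if f 0 = 1 then 1 else -1 with hsRdef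
  have hsC : ((sR : ℝ) : ℂ) = f 0 := by
    rcases hf0cases with h0 | h0
    · simp [hsRdef, h0]
    · rw [hsRdef, if_neg (by rw [h0]; intro hcon; exact (by norm_num : (-1 : ℂ) ≠ 1) hcon)]
      rw [h0]; norm_num
  set a : X → ℝ := fun x => sR * (if u x = α x then 1 else -1) with hadef
  have ha1 : ∀ x, a x = 1 ∨ a x = -1 := by
    intro x
    simp only [hadef, hsRdef]
    split_ifs <;> norm_num
  have hiff : ∀ x y : X, (u (x + (y + y)) = α (x + (y + y))) ↔ (u x = α x) := by
    intro x y
    have e1 : u (x + (y + y)) = u x * u y ^ 2 := h2y x y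
    have e2 : α (x + (y + y)) = α x * u y ^ 2 := by
      rw [hαadd, hα2]
    rw [e1, e2]
    exact mul_left_inj' (pow_ne_zero 2 (hune y))
  have hacoset : ∀ x y : X, a (x + 2 • y) = a x := by
    intro x y
    have e0 : (2 : ℕ) • y = y + y := two_nsmul y
    rw [e0]
    simp only [hadef]
    rw [if_congr (hiff x y) rfl rfl]
  have hfinal : ∀ x : X, f x = α x * (a x : ℂ) * Complex.exp ((P x : ℝ) : ℂ) := by
    intro x
    have e1 : Complex.exp ((P x : ℝ) : ℂ) = (r x : ℂ) := by
      rw [show ((P x : ℝ) : ℂ) = ((Real.log (r x) : ℝ) : ℂ) from rfl,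
        ← Complex.ofReal_exp, Real.exp_log (hrpos x)]
    have e3 : (if u x = α x then (1 : ℂ) else -1) * α x = u x := by
      split_ifs with h
      · rw [one_mul, h.symm]
      · rcases hsign x with h' | h'
        · exact absurd h' h
        · rw [h']; ring
    have e4 : ((a x : ℝ) : ℂ) = f 0 * (if u x = α x then (1 : ℂ) else -1) := by
      have : ((a x : ℝ) : ℂ) = ((sR : ℝ) : ℂ) *
          ((if u x = α x then (1 : ℝ) else -1 : ℝ) : ℂ) := by
        simp only [hadef]; push_cast; ring
      rw [this, hsC]
      congr 1
      split_ifs <;> norm_num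
    have e5 : f 0 * u x * (r x : ℂ) = f x := by
      simp only [hudef]
      field_simp [hrne x]
      linear_combination f x * hf00
    rw [e1, e4]
    rw [show α x * (f 0 * if u x = α x then (1 : ℂ) else -1) * (r x : ℂ)
        = f 0 * ((if u x = α x then (1 : ℂ) else -1) * α x) * (r x : ℂ) from by ring,
      e3, e5]
  exact ⟨α, a, P, hαadd, hαabs, ha1, hacoset, hPquad, hfinal⟩
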